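/- Let I be a finite partially ordered set, α ∈ I, and let M : I × I → ℤ[t,t⁻¹] be a transition matrix, i.e. M(β,β) = 1 for all β and M(β,γ) = 0 unless γ ≤ β. Then there is at most one family W : I → ℤ[t,t⁻¹] such that: (i) W(β) = 0 unless β ≤ α; (ii) W(α) = 1; (iii) for every β < α all coefficients of W(β) in degrees ≤ 0 vanish (W(β) ∈ tℤ[t]); and (iv) W satisfies the self-duality equation: for every γ ∈ I, W(γ)(t) = Σ_{β∈I} W(β)(t⁻¹)·M(β,γ). (This is the uniqueness of weight polynomials for a Verdier self-dual mixed tilting sheaf satisfying the weight condition (W), equivalently condition (W') of Lemma 3.4, used in Theorem 5.1 of the paper.) -/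

import Mathlib

open LaurentPolynomial

/-- Let `I` be a finite poset, `α ∈ I`, and `M : I × I → ℤ[t,t⁻¹]` a transition matrix
(`M β β = 1`, and `M β γ = 0` unless `γ ≤ β`).  There is at most one family
`W : I → ℤ[t,t⁻¹]` such that: (i) `W β = 0` unless `β ≤ α`; (ii) `W α = 1`;
(iii) for every `β < α` the Laurent polynomial `W β` lies in `tℤ[t]` (all coefficients in
degrees `≤ 0` vanish); (iv) the self-duality equation `W γ (t) = ∑ β, W β (t⁻¹) · M β γ`
holds.  (Uniqueness of weight polynomials for a Verdier self-dual mixed tilting sheaf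
satisfying condition (W'), used in Theorem 5.1.) -/
theorem weight_polynomials_unique_of_W' {I : Type*} [Fintype I] [PartialOrder I] (α : I)
    (M : I → I → LaurentPolynomial ℤ)
    (hMdiag : ∀ β, M β β = 1)
    (hMtri : ∀ β γ, ¬ γ ≤ β → M β γ = 0)
    (W W' : I → LaurentPolynomial ℤ)
    (hWsupp : ∀ β, ¬ β ≤ α → W β = 0)
    (hW'supp : ∀ β, ¬ β ≤ α → W' β = 0)
    (hWinit : W α = 1)
    (hW'init : W' α = 1)
    (hWpos : ∀ β, β < α → ∀ n : ℤ, n ≤ 0 → (W β).coeff n = 0)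
    (hW'pos : ∀ β, β < α → ∀ n : ℤ, n ≤ 0 → (W' β).coeff n = 0)
    (hWsd : ∀ γ, W γ = ∑ β, invert (W β) * M β γ)
    (hW'sd : ∀ γ, W' γ = ∑ β, invert (W' β) * M β γ) :
    W = W' := by
  set D : I → LaurentPolynomial ℤ := fun β => W β - W' β with hD
  have hDsd : ∀ γ, D γ = ∑ β, invert (D β) * M β γ := by
    intro γ
    have : W γ - W' γ = (∑ β, invert (W β) * M β γ) - ∑ β, invert (W' β) * M β γ := by
      rw [← hWsd, ← hW'sd]
    simp only [hD, this, ← Finset.sum_sub_distrib, ← sub_mul, ← map_sub]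
  have key : ∀ γ, D γ = 0 := by
    intro γ
    induction γ using WellFoundedGT.induction with
    | _ γ ih =>
      have hsum : D γ = invert (D γ) := by
        conv_lhs => rw [hDsd γ]
        rw [Finset.sum_eq_single γ]
        · rw [hMdiag, mul_one]
        · intro β _ hβ
          by_cases h : γ ≤ β
          · have : γ < β := lt_of_le_of_ne h (Ne.symm hβ)
            rw [ih β this, map_zero, zero_mul]
          · rw [hMtri β γ h, mul_zero]
        · intro h; exact absurd (Finset.mem_univ γ) h
      by_cases hle : γ ≤ α
      · rcases eq_or_lt_of_le hle with rfl | hlt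
        · simp [hD, hWinit, hW'init]
        · have hpos : ∀ n : ℤ, n ≤ 0 → (D γ).coeff n = 0 := by
            intro n hn
            rw [AddMonoidAlgebra.coeff_sub, Finsupp.sub_apply, hWpos γ hlt n hn, hW'pos γ hlt n hn, sub_zero]
          ext n
          rcases le_or_gt n 0 with hn | hn
          · simpa using hpos n hn
          · have := congrArg (fun p : LaurentPolynomial ℤ => p.coeff n) hsum
            simp only [invert_apply] at this
            rw [this]
            simpa using hpos (-n) (by omega)
      · simp [hD, hWsupp γ hle, hW'supp γ hle]
  funext γ
  have := key γ
  simpa [hD, sub_eq_zero] using this
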